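/- Let f ≠ 0 be a real constant, let α, β, γ, δ, κ, μ₁, μ₀ be constants with αδ − βγ ≠ 0 and κ ≠ 0, and suppose γ ≠ 0. Define F¹(t,x) = k·√|γt + δ|·exp(−(γx − μ₁δ + μ₀γ)²/(4fγ(γt + δ))) for a nonzero constant k, on the region where γt + δ > 0. Then F¹ satisfies the backward heat equation condition needed for the equivalence transformation; specifically, F¹_t + f·F¹_{xx} = ((X¹_t x + X⁰_t)/X¹)·F¹_x where X¹(t) = κ/(γt+δ) and X⁰(t) = κ(μ₁t+μ₀)/(γt+δ). -/

import Mathlib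

/-- Partial derivative with respect to the first (time) variable. -/
noncomputable def ptd (u : ℝ → ℝ → ℝ) (t x : ℝ) : ℝ := deriv (fun s => u s x) t

/-- Partial derivative with respect to the second (space) variable. -/
noncomputable def pxd (u : ℝ → ℝ → ℝ) (t x : ℝ) : ℝ := deriv (fun y => u t y) x

set_option maxHeartbeats 1000000 in
theorem stmt7 (f α β γ δ κ μ₁ μ₀ k : ℝ) (hf : f ≠ 0) (hγ : γ ≠ 0) (hk : k ≠ 0)
    (hΔ : α * δ - β * γ ≠ 0) (hκ : κ ≠ 0)
    (F1 : ℝ → ℝ → ℝ) (X1 X0 : ℝ → ℝ)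
    (hF1 : ∀ t x, F1 t x = k * Real.sqrt |γ * t + δ| *
        Real.exp (-(γ * x - μ₁ * δ + μ₀ * γ) ^ 2 / (4 * f * γ * (γ * t + δ))))
    (hX1 : ∀ t, X1 t = κ / (γ * t + δ))
    (hX0 : ∀ t, X0 t = κ * (μ₁ * t + μ₀) / (γ * t + δ)) :
    ∀ t x, γ * t + δ > 0 →
      ptd F1 t x + f * pxd (pxd F1) t x
        = ((deriv X1 t * x + deriv X0 t) / X1 t) * pxd F1 t x := by
  intro t x hpos
  have hc0 : γ * t + δ ≠ 0 := ne_of_gt hpos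
  set c : ℝ := γ * t + δ with hcdef
  -- linear function in s has derivative γ
  have hlin : ∀ s : ℝ, HasDerivAt (fun s : ℝ => γ * s + δ) γ s := by
    intro s
    simpa using ((hasDerivAt_id s).const_mul γ).add_const δ
  -- P y := γ*y - μ₁*δ + μ₀*γ, derivative γ
  have hP : ∀ y : ℝ, HasDerivAt (fun y : ℝ => γ * y - μ₁ * δ + μ₀ * γ) γ y := by
    intro y
    simpa using (((hasDerivAt_id y).const_mul γ).sub_const (μ₁ * δ)).add_const (μ₀ * γ)
  have hD : (4 : ℝ) * f * γ * c ≠ 0 := by positivity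
  -- spatial derivative of F1 t ·
  have hq : ∀ y : ℝ, HasDerivAt (fun y : ℝ => -(γ * y - μ₁ * δ + μ₀ * γ) ^ 2 / (4 * f * γ * c))
      (-(2 * (γ * y - μ₁ * δ + μ₀ * γ) * γ) / (4 * f * γ * c)) y := by
    intro y
    have := (((hP y).pow 2).neg).div_const (4 * f * γ * c)
    simp only [Pi.neg_def, Pi.pow_def] at this
    refine this.congr_deriv ?_
    ring
  have hK : ∀ y : ℝ, HasDerivAt (fun y : ℝ => F1 t y)
      (k * Real.sqrt |c| * Real.exp (-(γ * y - μ₁ * δ + μ₀ * γ) ^ 2 / (4 * f * γ * c)) *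
        (-(2 * (γ * y - μ₁ * δ + μ₀ * γ) * γ) / (4 * f * γ * c))) y := by
    intro y
    have h := ((hq y).exp).const_mul (k * Real.sqrt |c|)
    have heq : (fun y : ℝ => F1 t y)
        = fun y : ℝ => k * Real.sqrt |c| *
            Real.exp (-(γ * y - μ₁ * δ + μ₀ * γ) ^ 2 / (4 * f * γ * c)) := by
      funext y; rw [hF1]
    rw [heq]
    refine h.congr_deriv ?_
    ring
  have hpxd : ∀ y : ℝ, pxd F1 t y
      = k * Real.sqrt |c| * Real.exp (-(γ * y - μ₁ * δ + μ₀ * γ) ^ 2 / (4 * f * γ * c)) *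
        (-(2 * (γ * y - μ₁ * δ + μ₀ * γ) * γ) / (4 * f * γ * c)) := fun y => (hK y).deriv
  -- second spatial derivative
  have hlin2 : ∀ y : ℝ, HasDerivAt (fun y : ℝ => -(2 * (γ * y - μ₁ * δ + μ₀ * γ) * γ) / (4 * f * γ * c))
      (-(2 * γ * γ) / (4 * f * γ * c)) y := by
    intro y
    have := ((((hP y).const_mul 2).mul_const γ).neg).div_const (4 * f * γ * c)
    simp only [Pi.neg_def] at this
    convert this using 1
  have hK2 : HasDerivAt (fun y : ℝ => pxd F1 t y)
      (k * Real.sqrt |c| * Real.exp (-(γ * x - μ₁ * δ + μ₀ * γ) ^ 2 / (4 * f * γ * c)) *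
          (-(2 * (γ * x - μ₁ * δ + μ₀ * γ) * γ) / (4 * f * γ * c)) *
          (-(2 * (γ * x - μ₁ * δ + μ₀ * γ) * γ) / (4 * f * γ * c))
        + k * Real.sqrt |c| * Real.exp (-(γ * x - μ₁ * δ + μ₀ * γ) ^ 2 / (4 * f * γ * c)) *
          (-(2 * γ * γ) / (4 * f * γ * c))) x := by
    have heq : (fun y : ℝ => pxd F1 t y)
        = fun y : ℝ => (k * Real.sqrt |c| *
            Real.exp (-(γ * y - μ₁ * δ + μ₀ * γ) ^ 2 / (4 * f * γ * c))) *
            (-(2 * (γ * y - μ₁ * δ + μ₀ * γ) * γ) / (4 * f * γ * c)) := by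
      funext y; rw [hpxd y]
    rw [heq]
    have h := (((hq x).exp).const_mul (k * Real.sqrt |c|)).mul (hlin2 x)
    simp only [Pi.mul_def] at h
    refine h.congr_deriv ?_
    ring
  have hpxd2 : pxd (pxd F1) t x
      = k * Real.sqrt |c| * Real.exp (-(γ * x - μ₁ * δ + μ₀ * γ) ^ 2 / (4 * f * γ * c)) *
          (-(2 * (γ * x - μ₁ * δ + μ₀ * γ) * γ) / (4 * f * γ * c)) *
          (-(2 * (γ * x - μ₁ * δ + μ₀ * γ) * γ) / (4 * f * γ * c))
        + k * Real.sqrt |c| * Real.exp (-(γ * x - μ₁ * δ + μ₀ * γ) ^ 2 / (4 * f * γ * c)) *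
          (-(2 * γ * γ) / (4 * f * γ * c)) := hK2.deriv
  -- time derivative
  have habs : ∀ᶠ s in nhds t, |γ * s + δ| = γ * s + δ := by
    have hopen : IsOpen {s : ℝ | γ * s + δ > 0} :=
      isOpen_lt continuous_const (by continuity)
    filter_upwards [hopen.mem_nhds (by simpa using hpos)] with s hs
    exact abs_of_pos hs
  have hFev : (fun s => F1 s x) =ᶠ[nhds t]
      (fun s => k * Real.sqrt (γ * s + δ) *
        Real.exp (-(γ * x - μ₁ * δ + μ₀ * γ) ^ 2 / (4 * f * γ * (γ * s + δ)))) := by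
    filter_upwards [habs] with s hs
    rw [hF1, hs]
  have hsqrt : HasDerivAt (fun s : ℝ => Real.sqrt (γ * s + δ)) (1 / (2 * Real.sqrt c) * γ) t := by
    exact (Real.hasDerivAt_sqrt hc0).comp t (hlin t)
  have hexp : HasDerivAt (fun s : ℝ => Real.exp (-(γ * x - μ₁ * δ + μ₀ * γ) ^ 2 / (4 * f * γ * (γ * s + δ))))
      (Real.exp (-(γ * x - μ₁ * δ + μ₀ * γ) ^ 2 / (4 * f * γ * c)) *
        ((0 * (4 * f * γ * c) - -(γ * x - μ₁ * δ + μ₀ * γ) ^ 2 * (4 * f * γ * γ)) / (4 * f * γ * c) ^ 2)) t := by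
    have hden : ∀ s : ℝ, HasDerivAt (fun s : ℝ => 4 * f * γ * (γ * s + δ)) (4 * f * γ * γ) s := by
      intro s
      simpa using (hlin s).const_mul (4 * f * γ)
    have h := ((hasDerivAt_const t (-(γ * x - μ₁ * δ + μ₀ * γ) ^ 2)).div (hden t) hD).exp
    simp only [Pi.div_def] at h
    convert h using 2
  have hptd : ptd F1 t x
      = k * (1 / (2 * Real.sqrt c) * γ) *
          Real.exp (-(γ * x - μ₁ * δ + μ₀ * γ) ^ 2 / (4 * f * γ * c))
        + k * Real.sqrt c *
          (Real.exp (-(γ * x - μ₁ * δ + μ₀ * γ) ^ 2 / (4 * f * γ * c)) *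
            ((0 * (4 * f * γ * c) - -(γ * x - μ₁ * δ + μ₀ * γ) ^ 2 * (4 * f * γ * γ)) / (4 * f * γ * c) ^ 2)) := by
    have h := ((hsqrt.const_mul k).mul hexp)
    simp only [Pi.mul_def] at h
    have := hFev.deriv_eq
    rw [ptd, this]
    rw [h.deriv]
  -- derivatives of X1, X0
  have hX1' : deriv X1 t = (0 * c - κ * γ) / c ^ 2 := by
    have hX1f : X1 = fun s : ℝ => κ / (γ * s + δ) := funext hX1
    rw [hX1f]
    exact (((hasDerivAt_const t κ).div (hlin t) hc0)).deriv
  have hX0' : deriv X0 t = (κ * μ₁ * c - κ * (μ₁ * t + μ₀) * γ) / c ^ 2 := by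
    have hX0f : X0 = fun s : ℝ => κ * (μ₁ * s + μ₀) / (γ * s + δ) := funext hX0
    rw [hX0f]
    have hnum : HasDerivAt (fun s : ℝ => κ * (μ₁ * s + μ₀)) (κ * μ₁) t := by
      simpa using (((hasDerivAt_id t).const_mul μ₁).add_const μ₀).const_mul κ
    exact ((hnum.div (hlin t) hc0)).deriv
  have hX0'' : deriv X0 t = κ * (μ₁ * δ - μ₀ * γ) / c ^ 2 := by
    rw [hX0']
    simp only [hcdef]
    ring
  -- assemble
  rw [hptd, hpxd2, hpxd x, hX1', hX0'', hX1 t, abs_of_pos hpos, ← hcdef]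
  have hS0 : Real.sqrt c ≠ 0 := by positivity
  have hSS : Real.sqrt c * Real.sqrt c = c := Real.mul_self_sqrt hpos.le
  set S := Real.sqrt c with hS
  set E := Real.exp (-(γ * x - μ₁ * δ + μ₀ * γ) ^ 2 / (4 * f * γ * c)) with hE
  rw [← hSS]
  field_simp
  ring
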